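/- Let L be a pseudo-differential operator of the form ∂ + Σ_{j≥1} u_{j+1}∂^{-j} satisfying the Lax equations ∂L/∂t_n = [(Lⁿ)_{≥0}, L] for all n ≥ 2. Define L̃ = e^{ax} L e^{−ax} + a for a constant a. Then L̃ is again of the form ∂ + O(∂^{-1}), and after the change of time variables t_n ↦ Σ_{j≥n} binom(j,n) a^{j−n} t_j (with x ↦ x + Σ_{j≥2} j a^{j−1} t_j), L̃ satisfies the same Lax equations. -/
import Mathlib


/-- Galilean symmetry of the KP hierarchy, in the abstract algebra `E` of
pseudo-differential operators:  `proj` is the projection `(·)_{≥0}` onto the differential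
operator part, `D` is `∂`, `conj` is the conjugation `P ↦ e^{ax} P e^{−ax}` (an algebra
automorphism commuting with `proj` and sending `∂` to `∂ − a`), and `Dt n` is `∂/∂t_n`.
If `L = ∂ + O(∂^{-1})` (i.e. `proj (L − ∂) = 0`) satisfies the Lax equations
`∂L/∂t_n = [(Lⁿ)_{≥0}, L]`, then `L̃ = e^{ax} L e^{−ax} + a` is again of the form
`∂ + O(∂^{-1})`, and with respect to the new time variables
`t̃_m` (so that `∂/∂t̃_m = Σ_{n=1}^m binom(m,n) a^{m−n} ∂/∂t_n`, and `∂L̃/∂t_n` is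
`e^{ax}(∂L/∂t_n)e^{−ax}`), it satisfies the same Lax equations. -/
theorem kp_hierarchy_galilean {E : Type*} [Ring E] [Algebra ℂ E]
    (proj : E →ₗ[ℂ] E) (D : E) (a : ℂ) (conj : E ≃ₐ[ℂ] E)
    (Dt : ℕ → E → E) (L : E)
    (hproj1 : proj 1 = 1)
    (hprojconj : ∀ P : E, proj (conj P) = conj (proj P))
    (hconjD : conj D = D - algebraMap ℂ E a)
    (hform : proj (L - D) = 0)
    (hLax : ∀ n : ℕ, 1 ≤ n → Dt n L = proj (L ^ n) * L - L * proj (L ^ n)) :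
    proj ((conj L + algebraMap ℂ E a) - D) = 0 ∧
    ∀ m : ℕ, 1 ≤ m →
      (∑ n ∈ Finset.Icc 1 m, (m.choose n : ℂ) • (a ^ (m - n) • conj (Dt n L)))
        = proj ((conj L + algebraMap ℂ E a) ^ m) * (conj L + algebraMap ℂ E a)
          - (conj L + algebraMap ℂ E a) * proj ((conj L + algebraMap ℂ E a) ^ m) := by
  set c : E := algebraMap ℂ E a with hc
  have hcomm : ∀ x : E, c * x = x * c := fun x => Algebra.commutes a x
  constructor
  · have h1 : conj L + c - D = conj (L - D) := by
      rw [map_sub, hconjD]; abel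
    rw [h1, hprojconj, hform, map_zero]
  · intro m hm
    have hbin : (conj L + c) ^ m
        = ∑ n ∈ Finset.range (m + 1), (m.choose n : ℂ) • (a ^ (m - n) • conj (L ^ n)) := by
      rw [Commute.add_pow ((Algebra.commutes a (conj L)).symm : Commute (conj L) c)]
      refine Finset.sum_congr rfl fun n _ => ?_
      rw [Algebra.smul_def, Algebra.smul_def, map_pow conj, ← map_pow (algebraMap ℂ E),
        ← map_natCast (algebraMap ℂ E) (m.choose n)]
      simp only [Algebra.smul_def, map_pow, mul_assoc]
      have hA : (algebraMap ℂ E) a ^ (m - n) * conj L ^ n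
          = conj L ^ n * (algebraMap ℂ E) a ^ (m - n) :=
        (Commute.pow_pow (Algebra.commutes a (conj L)) _ _).eq
      rw [hA, Algebra.commutes ((m.choose n : ℕ) : ℂ)
        (conj L ^ n * (algebraMap ℂ E) a ^ (m - n)), ← mul_assoc]
    have hproj : proj ((conj L + c) ^ m)
        = ∑ n ∈ Finset.range (m + 1), (m.choose n : ℂ) • (a ^ (m - n) • conj (proj (L ^ n))) := by
      rw [hbin, map_sum]
      refine Finset.sum_congr rfl fun n _ => ?_
      rw [map_smul, map_smul, hprojconj]
    rw [hproj, Finset.sum_mul, Finset.mul_sum, ← Finset.sum_sub_distrib]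
    have hsplit : Finset.range (m + 1) = insert 0 (Finset.Icc 1 m) := by
      ext n
      simp [Nat.lt_succ_iff, Nat.one_le_iff_ne_zero, or_iff_not_imp_left]
      omega
    rw [hsplit, Finset.sum_insert (by simp)]
    have h0 : (m.choose 0 : ℂ) • (a ^ (m - 0) • conj (proj (L ^ 0))) * (conj L + c)
        - (conj L + c) * ((m.choose 0 : ℂ) • (a ^ (m - 0) • conj (proj (L ^ 0)))) = 0 := by
      simp [pow_zero, hproj1, smul_mul_assoc, mul_smul_comm]
    rw [h0, zero_add]
    refine Finset.sum_congr rfl fun n hn => ?_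
    have hn1 : 1 ≤ n := (Finset.mem_Icc.mp hn).1
    rw [hLax n hn1, smul_mul_assoc, smul_mul_assoc, mul_smul_comm, mul_smul_comm,
      ← smul_sub, ← smul_sub]
    congr 1
    congr 1
    have : conj (proj (L ^ n)) * (conj L + c) - (conj L + c) * conj (proj (L ^ n))
        = conj (proj (L ^ n)) * conj L - conj L * conj (proj (L ^ n)) := by
      rw [mul_add, add_mul, ← hcomm (conj (proj (L ^ n)))]
      abel
    rw [this, ← map_mul, ← map_mul, ← map_sub]
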